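/- Any two henselian valuations v, w on a field K that is not separably closed and such that both residue fields Kv and Kw are not separably closed are comparable: O_v ⊆ O_w or O_w ⊆ O_v. -/

import Mathlib

open Polynomial IsLocalRing

section Aux
variable {K : Type*} [Field K]

lemma vs_one_lt_val {A : ValuationSubring K} {x : K} (h : x ∉ A) : 1 < A.valuation x :=
  lt_of_not_ge fun hle => h (A.mem_of_valuation_le_one x hle)

/-- key approximation: given incomparability witnesses, any `x ∈ A` can be corrected to
`y ∈ A ⊓ B` with `x - y` in the maximal ideal of `A`. -/
lemma vs_key_y {A B : ValuationSubring K} {x b : K} (hxA : x ∈ A) (hxB : x ∉ B)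
    (hbB : b ∈ B) (hbA : b ∉ A) :
    ∃ y : K, y ∈ A ∧ y ∈ B ∧ A.valuation (x - y) < 1 := by
  have hA1 : A.valuation x ≤ 1 := (A.valuation_le_one_iff x).2 hxA
  have hA2 : 1 < A.valuation b := vs_one_lt_val hbA
  have hB1 : B.valuation b ≤ 1 := (B.valuation_le_one_iff b).2 hbB
  have hB2 : 1 < B.valuation x := vs_one_lt_val hxB
  have hxb : x + b ≠ 0 := by
    intro h
    exact hbA (by rw [eq_neg_of_add_eq_zero_right h]; exact A.neg_mem _ hxA)
  have hvsum : A.valuation (x + b) = A.valuation b :=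
    Valuation.map_add_eq_of_lt_right _ (lt_of_le_of_lt hA1 hA2)
  have hwsum : B.valuation (x + b) = B.valuation x :=
    Valuation.map_add_eq_of_lt_left _ (lt_of_le_of_lt hB1 hB2)
  have hbne : A.valuation b ≠ 0 := fun h => by simp [h] at hA2
  have hxne : B.valuation x ≠ 0 := fun h => by simp [h] at hB2
  refine ⟨x * b / (x + b), ?_, ?_, ?_⟩
  · apply A.mem_of_valuation_le_one
    have h1 : (x * b / (x + b)) * (x + b) = x * b := div_mul_cancel₀ _ hxb
    have h2 := congrArg A.valuation h1
    rw [Valuation.map_mul, Valuation.map_mul, hvsum] at h2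
    have := mul_right_cancel₀ hbne h2
    rw [this]; exact hA1
  · apply B.mem_of_valuation_le_one
    have h1 : (x * b / (x + b)) * (x + b) = b * x := by field_simp
    have h2 := congrArg B.valuation h1
    rw [Valuation.map_mul, Valuation.map_mul, hwsum] at h2
    have := mul_right_cancel₀ hxne h2
    rw [this]; exact hB1
  · have h1 : (x - x * b / (x + b)) * (x + b) = x * x := by field_simp; ring
    have h2 := congrArg A.valuation h1
    rw [Valuation.map_mul, Valuation.map_mul, hvsum] at h2
    by_contra hcon
    push_neg at hcon
    have : A.valuation b ≤ A.valuation (x - x * b / (x + b)) * A.valuation b := by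
      calc A.valuation b = 1 * A.valuation b := (one_mul _).symm
      _ ≤ _ := mul_le_mul_left hcon _
    rw [h2] at this
    have hle1 : A.valuation x * A.valuation x ≤ 1 := mul_le_one' hA1 hA1
    exact absurd (le_trans this hle1) (not_le.2 hA2)

/-- the splitting element: `v(e) < 1` and `w(1-e) < 1`. -/
lemma vs_key_e {A B : ValuationSubring K} {a b : K} (haA : a ∈ A) (haB : a ∉ B)
    (hbB : b ∈ B) (hbA : b ∉ A) :
    ∃ e : K, e ∈ A ∧ e ∈ B ∧ A.valuation e < 1 ∧ B.valuation (1 - e) < 1 := by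
  have hA1 : A.valuation a ≤ 1 := (A.valuation_le_one_iff a).2 haA
  have hA2 : 1 < A.valuation b := vs_one_lt_val hbA
  have hB1 : B.valuation b ≤ 1 := (B.valuation_le_one_iff b).2 hbB
  have hB2 : 1 < B.valuation a := vs_one_lt_val haB
  have hab : a + b ≠ 0 := by
    intro h
    exact haB (by rw [eq_neg_of_add_eq_zero_left h]; exact B.neg_mem _ hbB)
  have hvsum : A.valuation (a + b) = A.valuation b :=
    Valuation.map_add_eq_of_lt_right _ (lt_of_le_of_lt hA1 hA2)
  have hwsum : B.valuation (a + b) = B.valuation a :=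
    Valuation.map_add_eq_of_lt_left _ (lt_of_le_of_lt hB1 hB2)
  have hane : B.valuation a ≠ 0 := fun h => by simp [h] at hB2
  have hbne : A.valuation b ≠ 0 := fun h => by simp [h] at hA2
  have heA : A.valuation (a / (a + b)) < 1 := by
    have h1 : (a / (a + b)) * (a + b) = a := div_mul_cancel₀ _ hab
    have h2 := congrArg A.valuation h1
    rw [Valuation.map_mul, hvsum] at h2
    by_contra hcon
    push_neg at hcon
    have : A.valuation b ≤ A.valuation a := by
      calc A.valuation b = 1 * A.valuation b := (one_mul _).symm
      _ ≤ A.valuation (a / (a + b)) * A.valuation b := mul_le_mul_left hcon _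
      _ = A.valuation a := h2
    exact absurd (le_trans this hA1) (not_le.2 hA2)
  have h1e : (1 - a / (a + b)) = b / (a + b) := by field_simp; ring
  have heB : B.valuation (1 - a / (a + b)) < 1 := by
    rw [h1e]
    have h1 : (b / (a + b)) * (a + b) = b := div_mul_cancel₀ _ hab
    have h2 := congrArg B.valuation h1
    rw [Valuation.map_mul, hwsum] at h2
    by_contra hcon
    push_neg at hcon
    have : B.valuation a ≤ B.valuation b := by
      calc B.valuation a = 1 * B.valuation a := (one_mul _).symm
      _ ≤ B.valuation (b / (a + b)) * B.valuation a := mul_le_mul_left hcon _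
      _ = B.valuation b := h2
    exact absurd (le_trans this hB1) (not_le.2 hB2)
  refine ⟨a / (a + b), A.mem_of_valuation_le_one _ heA.le, ?_, heA, heB⟩
  apply B.mem_of_valuation_le_one
  have h1 : (a / (a + b)) * (a + b) = a := div_mul_cancel₀ _ hab
  have h2 := congrArg B.valuation h1
  rw [Valuation.map_mul, hwsum] at h2
  have h3 : B.valuation (a / (a + b)) * B.valuation a = 1 * B.valuation a := by
    rw [one_mul]; exact h2
  rw [mul_right_cancel₀ hane h3]

lemma vs_lift {A B : ValuationSubring K} {b : K}
    (hbB : b ∈ B) (hbA : b ∉ A) (z : ResidueField A) :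
    ∃ (c : K) (hcA : c ∈ A), c ∈ B ∧ residue A ⟨c, hcA⟩ = z := by
  obtain ⟨x, rfl⟩ := residue_surjective (R := A) z
  by_cases hxB : (x : K) ∈ B
  · exact ⟨x, x.2, hxB, rfl⟩
  · obtain ⟨y, hyA, hyB, hlt⟩ := vs_key_y x.2 hxB hbB hbA
    refine ⟨y, hyA, hyB, ?_⟩
    have hm : ((⟨y, hyA⟩ : A) - x) ∈ maximalIdeal A := by
      rw [ValuationSubring.valuation_lt_one_iff]
      show A.valuation (y - (x : K)) < 1
      rwa [Valuation.map_sub_swap]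
    have h0 : residue A ((⟨y, hyA⟩ : A) - x) = 0 := (residue_eq_zero_iff _).2 hm
    rw [map_sub, sub_eq_zero] at h0
    exact h0

lemma vs_core {A B : ValuationSubring K} [HenselianLocalRing B]
    (hab : ¬ A ≤ B) (hba : ¬ B ≤ A)
    {g : Polynomial (ResidueField A)} (hg : Irreducible g) : g.degree = 1 := by
  by_contra hdeg
  have hg0 : g ≠ 0 := hg.ne_zero
  have hpos : 0 < g.natDegree :=
    natDegree_pos_iff_degree_pos.2 (degree_pos_of_irreducible hg)
  have hnd1 : g.natDegree ≠ 1 := fun h => hdeg (by rw [degree_eq_natDegree hg0, h]; rfl)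
  obtain ⟨k, hk⟩ : ∃ k, g.natDegree = k + 2 := ⟨g.natDegree - 2, by omega⟩
  set n := k + 2 with hn
  set G := g * C (g.leadingCoeff)⁻¹ with hG
  have hGm : G.Monic := monic_mul_leadingCoeff_inv hg0
  have hGdeg : G.natDegree = n := by
    rw [← hk]; exact natDegree_eq_of_degree_eq (degree_mul_leadingCoeff_inv g hg0)
  have hGroot : ∀ z, ¬ G.IsRoot z := by
    intro z hz
    rw [IsRoot, eval_mul, eval_C, mul_eq_zero] at hz
    rcases hz with h | h
    · exact hdeg (degree_eq_one_of_irreducible_of_root hg h)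
    · exact absurd h (inv_ne_zero (leadingCoeff_ne_zero.2 hg0))
  obtain ⟨a, haA, haB⟩ := SetLike.not_le_iff_exists.1 hab
  obtain ⟨b, hbB, hbA⟩ := SetLike.not_le_iff_exists.1 hba
  obtain ⟨e, heA, heB, heval, h1eval⟩ := vs_key_e haA haB hbB hbA
  choose c hcA hcB hcres using fun i : Fin n => vs_lift hbB hbA (G.coeff i)
  set q : Fin n → K := fun i => if (i : ℕ) = 1 then (-1 : K) else 0 with hq
  set d : Fin n → K := fun i => (1 - e) * c i + e * q i with hd
  have hqA : ∀ i, q i ∈ A := by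
    intro i; rw [hq]; dsimp only; split
    · exact A.neg_mem _ A.one_mem
    · exact A.zero_mem
  have hqB : ∀ i, q i ∈ B := by
    intro i; rw [hq]; dsimp only; split
    · exact B.neg_mem _ B.one_mem
    · exact B.zero_mem
  have hdA : ∀ i, d i ∈ A := fun i =>
    A.add_mem _ _ (A.mul_mem _ _ (sub_mem A.one_mem heA) (hcA i))
      (A.mul_mem _ _ heA (hqA i))
  have hdB : ∀ i, d i ∈ B := fun i =>
    B.add_mem _ _ (B.mul_mem _ _ (sub_mem B.one_mem heB) (hcB i))
      (B.mul_mem _ _ heB (hqB i))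
  -- the v-side closeness of d and c
  have hdvA : ∀ i, A.valuation (d i - c i) < 1 := by
    intro i
    have h1 : d i - c i = e * (q i - c i) := by rw [hd]; ring
    rw [h1, Valuation.map_mul]
    calc A.valuation e * A.valuation (q i - c i)
        ≤ A.valuation e * 1 := mul_le_mul_right
          ((A.valuation_le_one_iff _).2 (sub_mem (hqA i) (hcA i))) _
      _ = A.valuation e := mul_one _
      _ < 1 := heval
  -- w-side values
  have heB1 : B.valuation e = 1 := by
    have h1 : e = 1 - (1 - e) := by ring
    have h2 : B.valuation (1 - (1 - e)) = 1 := by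
      rw [Valuation.map_sub_swap]
      have := Valuation.map_sub_eq_of_lt_right (v := B.valuation) (x := 1 - e) (y := (1:K))
        (by simpa using h1eval)
      simpa using this
    rw [h1]; exact h2
  have hi0 : (0 : ℕ) < n := by omega
  have hi1 : (1 : ℕ) < n := by omega
  have hd0 : B.valuation (d ⟨0, hi0⟩) < 1 := by
    have h1 : d ⟨0, hi0⟩ = (1 - e) * c ⟨0, hi0⟩ := by
      rw [hd, hq]; norm_num
    rw [h1, Valuation.map_mul]
    calc B.valuation (1 - e) * B.valuation (c ⟨0, hi0⟩)
        ≤ B.valuation (1 - e) * 1 := mul_le_mul_right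
          ((B.valuation_le_one_iff _).2 (hcB _)) _
      _ = B.valuation (1 - e) := mul_one _
      _ < 1 := h1eval
  have hd1 : B.valuation (d ⟨1, hi1⟩) = 1 := by
    have h1 : d ⟨1, hi1⟩ = (1 - e) * c ⟨1, hi1⟩ + (-e) := by
      rw [hd, hq]; norm_num
    have h2 : B.valuation ((1 - e) * c ⟨1, hi1⟩) < B.valuation (-e) := by
      rw [Valuation.map_neg, heB1, Valuation.map_mul]
      calc B.valuation (1 - e) * B.valuation (c ⟨1, hi1⟩)
          ≤ B.valuation (1 - e) * 1 := mul_le_mul_right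
            ((B.valuation_le_one_iff _).2 (hcB _)) _
        _ = B.valuation (1 - e) := mul_one _
        _ < 1 := h1eval
    rw [h1, Valuation.map_add_eq_of_lt_right _ h2, Valuation.map_neg, heB1]
  -- the polynomial over B
  set dB : Fin n → B := fun i => (⟨d i, hdB i⟩ : B) with hdBdef
  set H : Polynomial B := X ^ n + ∑ i : Fin n, C (dB i) * X ^ (i : ℕ) with hH
  have hHm : H.Monic := monic_X_pow_add (degree_sum_fin_lt dB)
  have hHc : ∀ m : Fin n, H.coeff (m : ℕ) = dB m := by
    intro m
    rw [hH, coeff_add, coeff_X_pow, finset_sum_coeff]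
    rw [if_neg (by omega : ¬((m : ℕ) = n)), zero_add]
    have h2 : ∀ i : Fin n, (C (dB i) * X ^ (i : ℕ)).coeff (m : ℕ)
        = if i = m then dB i else 0 := by
      intro i
      rw [coeff_C_mul_X_pow]
      congr 1
      simp [Fin.ext_iff, eq_comm]
    rw [Finset.sum_congr rfl (fun i _ => h2 i), Finset.sum_ite_eq' Finset.univ m dB,
      if_pos (Finset.mem_univ m)]
  have h0mem : H.eval 0 ∈ maximalIdeal B := by
    have : H.eval 0 = dB ⟨0, hi0⟩ := by
      rw [← coeff_zero_eq_eval_zero]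
      exact hHc ⟨0, hi0⟩
    rw [this, ValuationSubring.valuation_lt_one_iff]
    exact hd0
  have hunit : IsUnit (H.derivative.eval 0) := by
    have h1 : H.derivative.eval 0 = H.coeff 1 * 1 := by
      rw [← coeff_zero_eq_eval_zero, coeff_derivative]
      norm_num
    have h2 : H.coeff 1 = dB ⟨1, hi1⟩ := hHc ⟨1, hi1⟩
    rw [h1, mul_one, h2, ValuationSubring.valuation_eq_one_iff]
    exact hd1
  obtain ⟨r, hroot, -⟩ := HenselianLocalRing.is_henselian H hHm 0 h0mem hunit
  set ρ : K := (r : K) with hρ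
  have hKeq : ρ ^ n + ∑ i : Fin n, d i * ρ ^ (i : ℕ) = 0 := by
    have h1 : B.subtype (H.eval r) = 0 := by rw [hroot]; exact map_zero _
    rw [← eval₂_at_apply] at h1
    simp only [hH, eval₂_add, eval₂_pow, eval₂_X, eval₂_finset_sum, eval₂_mul,
      eval₂_C] at h1
    exact h1
  -- the root lies in A
  have hρA : ρ ∈ A := by
    apply A.mem_of_valuation_le_one
    by_contra hcon
    push_neg at hcon
    have hρne : A.valuation ρ ≠ 0 := fun h => by simp [h] at hcon
    have hsum : A.valuation (∑ i : Fin n, d i * ρ ^ (i : ℕ))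
        ≤ A.valuation ρ ^ (k + 1) := by
      apply Valuation.map_sum_le
      intro i _
      calc A.valuation (d i * ρ ^ (i : ℕ))
          = A.valuation (d i) * A.valuation ρ ^ (i : ℕ) := by
            rw [Valuation.map_mul, Valuation.map_pow]
        _ ≤ 1 * A.valuation ρ ^ (i : ℕ) :=
            mul_le_mul_left ((A.valuation_le_one_iff _).2 (hdA i)) _
        _ = A.valuation ρ ^ (i : ℕ) := one_mul _
        _ ≤ A.valuation ρ ^ (k + 1) := pow_le_pow_right' hcon.le (by omega)
    have heqn : ρ ^ n = -∑ i : Fin n, d i * ρ ^ (i : ℕ) :=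
      eq_neg_of_add_eq_zero_left hKeq
    have h2 : A.valuation ρ ^ (k + 1) * A.valuation ρ ≤ A.valuation ρ ^ (k + 1) := by
      calc A.valuation ρ ^ (k + 1) * A.valuation ρ
          = A.valuation ρ ^ n := (pow_succ _ (k+1)).symm
        _ = A.valuation (ρ ^ n) := (Valuation.map_pow _ _ _).symm
        _ = A.valuation (∑ i : Fin n, d i * ρ ^ (i : ℕ)) := by
            rw [heqn, Valuation.map_neg]
        _ ≤ A.valuation ρ ^ (k + 1) := hsum
    have hpne : A.valuation ρ ^ (k + 1) ≠ 0 := pow_ne_zero _ hρne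
    have h3 : A.valuation ρ ≤ 1 := by
      have := mul_le_mul_right h2 ((A.valuation ρ ^ (k + 1))⁻¹)
      rwa [← mul_assoc, inv_mul_cancel₀ hpne, one_mul] at this
    exact absurd h3 (not_le.2 hcon)
  -- pass to the residue field of A
  set rA : A := (⟨ρ, hρA⟩ : A) with hrA
  set dA : Fin n → A := fun i => (⟨d i, hdA i⟩ : A) with hdAdef
  have hAeq : rA ^ n + ∑ i : Fin n, dA i * rA ^ (i : ℕ) = 0 := by
    apply Subtype.ext
    push_cast
    exact hKeq
  set φ := residue (R := A) with hφ
  have hres : (φ rA) ^ n + ∑ i : Fin n, φ (dA i) * (φ rA) ^ (i : ℕ) = 0 := by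
    have := congrArg φ hAeq
    simpa only [map_add, map_pow, map_sum, map_mul, map_zero] using this
  have hφd : ∀ i : Fin n, φ (dA i) = G.coeff (i : ℕ) := by
    intro i
    have hm : (dA i - (⟨c i, hcA i⟩ : A)) ∈ maximalIdeal A := by
      rw [ValuationSubring.valuation_lt_one_iff]
      exact hdvA i
    have h0 : φ (dA i) - φ (⟨c i, hcA i⟩ : A) = 0 := by
      rw [← map_sub]
      exact (residue_eq_zero_iff _).2 hm
    rw [sub_eq_zero] at h0
    rw [h0, hφ, hcres i]
  -- evaluate G at the residue of the root
  apply hGroot (φ rA)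
  rw [IsRoot, eval_eq_sum_range, hGdeg, Finset.sum_range_succ]
  have hcn : G.coeff n = 1 := by
    rw [← hGdeg]; exact hGm.coeff_natDegree
  rw [hcn, one_mul, Finset.sum_range fun i => G.coeff i * (φ rA) ^ i]
  rw [add_comm]
  rw [← hres]
  congr 1
  apply Finset.sum_congr rfl
  intro i _
  rw [hφd i]

end Aux

/-- any two henselian valuations on a field `K` which is not separably
closed, both of whose residue fields are not separably closed, are comparable. -/
theorem henselian_H1_comparable
    {K : Type*} [Field K] (hK : ¬ IsSepClosed K)
    (v w : ValuationSubring K)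
    [HenselianLocalRing v] [HenselianLocalRing w]
    (hv : ¬ IsSepClosed (IsLocalRing.ResidueField v))
    (hw : ¬ IsSepClosed (IsLocalRing.ResidueField w)) :
    v ≤ w ∨ w ≤ v := by
  by_contra hcon
  push_neg at hcon
  exact hv (IsSepClosed.of_exists_root _ fun p _ hp _ =>
    exists_root_of_degree_eq_one (vs_core hcon.1 hcon.2 hp))
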